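/- Let G = (V, E) be a finite connected undirected graph with |V| ≥ 2 and let 1 ≤ k ≤ |V| − 1. Then G has a connected dominating set of size at most k if and only if G has a spanning tree with at least |V| − k leaves. -/

import Mathlib

open SimpleGraph

section Aux

variable {W : Type*}

/-- vertices reachable from a closed set stay in the set -/
private lemma closed_walk {G : SimpleGraph W} {S : Set W}
    (hS : ∀ x ∈ S, ∀ y, G.Adj x y → y ∈ S) {u v : W} (p : G.Walk u v) (hu : u ∈ S) : v ∈ S := by
  induction p with
  | nil => exact hu
  | cons h _ ih => exact ih (hS _ hu _ h)

/-- every finite connected graph has a spanning tree -/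
private lemma exists_tree_le [Finite W] {G : SimpleGraph W} (hG : G.Connected) :
    ∃ T, T ≤ G ∧ T.IsTree := by
  classical
  generalize hn : G.edgeSet.ncard = n
  induction n using Nat.strong_induction_on generalizing G with
  | _ n ih =>
    by_cases hac : G.IsAcyclic
    · exact ⟨G, le_rfl, hG, hac⟩
    · simp only [IsAcyclic, not_forall, not_not] at hac
      obtain ⟨v, c, hc⟩ := hac
      cases c with
      | nil => exact absurd rfl hc.ne_nil
      | @cons _ w _ hadj p =>
        have hnb : ¬ G.IsBridge s(v, w) := by
          rw [isBridge_iff_adj_and_forall_cycle_notMem hadj]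
          intro h
          exact h _ hc (by simp)
        rw [isBridge_iff] at hnb
        push_neg at hnb
        have hreach : (G \ fromEdgeSet {s(v, w)}).Reachable v w := hnb
        set G' := G \ fromEdgeSet {s(v, w)} with hG'
        have hle : G' ≤ G := sdiff_le
        have htrans : ∀ {x y : W}, G.Walk x y → G'.Reachable x y := by
          intro x y q
          induction q with
          | nil => exact Reachable.refl _
          | @cons a b _ hab q ihq =>
            refine Reachable.trans ?_ ihq
            by_cases he : s(a, b) = s(v, w)
            · rw [Sym2.eq_iff] at he
              rcases he with ⟨rfl, rfl⟩ | ⟨rfl, rfl⟩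
              · exact hreach
              · exact hreach.symm
            · refine SimpleGraph.Adj.reachable ?_
              rw [hG', sdiff_adj, fromEdgeSet_adj]
              exact ⟨hab, by simp [he]⟩
        have hG'conn : G'.Connected := by
          haveI : Nonempty W := hG.nonempty
          exact Connected.mk fun x y => htrans (hG.preconnected x y).some
        have hlt : G'.edgeSet.ncard < n := by
          rw [← hn]
          refine Set.ncard_lt_ncard ⟨edgeSet_mono hle, fun hsub => ?_⟩ G.edgeSet.toFinite
          have h1 : s(v, w) ∈ G.edgeSet := hadj
          have h2 : s(v, w) ∈ G'.edgeSet := hsub h1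
          rw [mem_edgeSet, hG', sdiff_adj, fromEdgeSet_adj] at h2
          exact h2.2 ⟨rfl, hadj.ne⟩
        obtain ⟨T, hT1, hT2⟩ := ih _ hlt hG'conn rfl
        exact ⟨T, hT1.trans hle, hT2⟩

/-- a connected graph with `|V| - 1` edges is a tree -/
private lemma isTree_of_connected_of_card [Fintype W] {G : SimpleGraph W} (hG : G.Connected)
    (hcard : G.edgeSet.ncard + 1 = Fintype.card W) : G.IsTree := by
  classical
  obtain ⟨T, hTG, hT⟩ := exists_tree_le hG
  letI : Fintype T.edgeSet := Fintype.ofFinite _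
  have h1 : T.edgeFinset.card + 1 = Fintype.card W := hT.card_edgeFinset
  have h2 : T.edgeSet.ncard = T.edgeFinset.card := Set.ncard_eq_toFinset_card' _
  have h3 : T.edgeSet = G.edgeSet :=
    Set.eq_of_subset_of_ncard_le (edgeSet_mono hTG) (by omega) G.edgeSet.toFinite
  rwa [edgeSet_inj.mp h3] at hT

/-- a path between two internal vertices of `T ≤ G` stays internal, hence they are
reachable in the induced graph on internal vertices -/
private lemma induce_reach {G T : SimpleGraph W} (hTG : T ≤ G)
    {x y : W} (p : T.Walk x y) :
    p.IsPath → ∀ (hx : (T.neighborSet x).ncard ≠ 1) (hy : (T.neighborSet y).ncard ≠ 1),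
    (G.induce {v | (T.neighborSet v).ncard ≠ 1}).Reachable ⟨x, hx⟩ ⟨y, hy⟩ := by
  induction p with
  | nil => intro _ hx hy; exact Reachable.refl _
  | @cons a b c hab q ih =>
    intro hp hx hy
    have hb : (T.neighborSet b).ncard ≠ 1 := by
      cases q with
      | nil => exact hy
      | @cons _ d _ hbd q' =>
        intro h1
        obtain ⟨z, hz⟩ := Set.ncard_eq_one.mp h1
        have ha : a ∈ T.neighborSet b := hab.symm
        have hd : d ∈ T.neighborSet b := hbd
        rw [hz, Set.mem_singleton_iff] at ha hd
        have hadne : a ≠ d := by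
          rintro rfl
          have : a ∈ (Walk.cons hbd q').support := by
            simp [Walk.support_cons, Walk.start_mem_support]
          exact ((Walk.cons_isPath_iff _ _).mp hp).2 this
        exact hadne (ha.trans hd.symm)
    have step : (G.induce {v | (T.neighborSet v).ncard ≠ 1}).Adj ⟨a, hx⟩ ⟨b, hb⟩ :=
      hTG hab
    exact step.reachable.trans (ih hp.of_cons hb hy)

end Aux

/-- A connected graph on at least two vertices has a connected dominating set of size at
most `k` iff it has a spanning tree with at least `|V| - k` leaves. -/
theorem stmt15 {V : Type*} [Fintype V] (G : SimpleGraph V) (hG : G.Connected)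
    (h2 : 2 ≤ Fintype.card V) (k : ℕ) (hk1 : 1 ≤ k) (hk2 : k ≤ Fintype.card V - 1) :
    (∃ D : Set V, D.ncard ≤ k ∧ (G.induce D).Connected ∧
        ∀ v, v ∈ D ∨ ∃ u ∈ D, G.Adj u v) ↔
      (∃ T : SimpleGraph V, T ≤ G ∧ T.IsTree ∧
        Fintype.card V - k ≤ {v : V | (T.neighborSet v).ncard = 1}.ncard) := by
  classical
  constructor
  · rintro ⟨D, hDk, hDconn, hdom⟩
    have hDne : D.Nonempty := Set.nonempty_coe_sort.mp hDconn.nonempty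
    have hch : ∀ v : V, ∃ u, v ∉ D → u ∈ D ∧ G.Adj u v := by
      intro v
      by_cases hv : v ∈ D
      · exact ⟨v, fun h => absurd hv h⟩
      · obtain ⟨u, hu1, hu2⟩ := (hdom v).resolve_left hv
        exact ⟨u, fun _ => ⟨hu1, hu2⟩⟩
    choose f hf using hch
    have hfD : ∀ v ∉ D, f v ∈ D := fun v hv => (hf v hv).1
    have hfadj : ∀ v ∉ D, G.Adj (f v) v := fun v hv => (hf v hv).2
    have hfne : ∀ v ∉ D, v ≠ f v := fun v hv h => hv (h ▸ hfD v hv)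
    obtain ⟨T₀, hT₀le, hT₀⟩ := exists_tree_le hDconn
    set E₁ : Set (Sym2 V) := Sym2.map (Subtype.val) '' T₀.edgeSet with hE₁
    set E₂ : Set (Sym2 V) := (fun v => s(v, f v)) '' Dᶜ with hE₂
    set T : SimpleGraph V := fromEdgeSet (E₁ ∪ E₂) with hT
    have hE₁mem : ∀ {a b : V}, s(a, b) ∈ E₁ →
        ∃ (ha : a ∈ D) (hb : b ∈ D), T₀.Adj ⟨a, ha⟩ ⟨b, hb⟩ := by
      rintro a b ⟨e, he, hmap⟩
      induction e using Sym2.ind with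
      | _ x y =>
        rw [Sym2.map_pair_eq, Sym2.eq_iff] at hmap
        rcases hmap with ⟨hxa, hyb⟩ | ⟨hxb, hya⟩
        · obtain rfl : (x : V) = a := hxa
          obtain rfl : (y : V) = b := hyb
          exact ⟨x.2, y.2, he⟩
        · obtain rfl : (x : V) = b := hxb
          obtain rfl : (y : V) = a := hya
          exact ⟨y.2, x.2, ((SimpleGraph.mem_edgeSet T₀).mp he).symm⟩
    have hE₂mem : ∀ {a b : V}, s(a, b) ∈ E₂ → (a ∉ D ∧ b = f a) ∨ (b ∉ D ∧ a = f b) := by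
      rintro a b ⟨v, hv, hmap⟩
      rw [Sym2.eq_iff] at hmap
      rcases hmap with ⟨rfl, rfl⟩ | ⟨rfl, rfl⟩
      · exact Or.inl ⟨hv, rfl⟩
      · exact Or.inr ⟨hv, rfl⟩
    have hTle : T ≤ G := by
      intro a b hab
      rw [hT, fromEdgeSet_adj] at hab
      rcases hab.1 with h | h
      · obtain ⟨ha, hb, hadj⟩ := hE₁mem h
        exact hT₀le hadj
      · rcases hE₂mem h with ⟨hv, rfl⟩ | ⟨hv, rfl⟩
        · exact (hfadj a hv).symm
        · exact hfadj b hv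
    have hpend : ∀ v ∉ D, T.Adj v (f v) := by
      intro v hv
      rw [hT, fromEdgeSet_adj]
      exact ⟨Or.inr ⟨v, hv, rfl⟩, hfne v hv⟩
    have htree : ∀ x y : ↥D, T₀.Adj x y → T.Adj x y := by
      intro x y h
      rw [hT, fromEdgeSet_adj]
      refine ⟨Or.inl ⟨s(x, y), h, ?_⟩, fun hxy => h.ne (Subtype.ext hxy)⟩
      rw [Sym2.map_pair_eq]
    have hreachD : ∀ x y : ↥D, T.Reachable (x : V) (y : V) := by
      intro x y
      exact (hT₀.isConnected.preconnected x y).map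
        ⟨Subtype.val, fun {a b} hadj => htree a b hadj⟩
    have hreachany : ∀ v : V, ∃ d ∈ D, T.Reachable v d := by
      intro v
      by_cases hv : v ∈ D
      · exact ⟨v, hv, Reachable.refl v⟩
      · exact ⟨f v, hfD v hv, (hpend v hv).reachable⟩
    have hTconn : T.Connected := by
      haveI : Nonempty V := hG.nonempty
      refine Connected.mk fun x y => ?_
      obtain ⟨dx, hdx, hrx⟩ := hreachany x
      obtain ⟨dy, hdy, hry⟩ := hreachany y
      exact hrx.trans ((hreachD ⟨dx, hdx⟩ ⟨dy, hdy⟩).trans hry.symm)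
    have hnodiag : ∀ e ∈ E₁ ∪ E₂, ¬ e.IsDiag := by
      rintro e (⟨e', he', rfl⟩ | ⟨v, hv, rfl⟩)
      · rw [Sym2.isDiag_map Subtype.val_injective]
        exact T₀.not_isDiag_of_mem_edgeSet he'
      · simp only [Sym2.isDiag_iff_proj_eq]
        exact hfne v hv
    have hedgeT : T.edgeSet = E₁ ∪ E₂ := by
      rw [hT, edgeSet_fromEdgeSet]
      ext e
      simp only [Set.mem_diff, Set.mem_setOf_eq]
      exact ⟨fun h => h.1, fun h => ⟨h, hnodiag e h⟩⟩
    have hdisj : Disjoint E₁ E₂ := by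
      rw [Set.disjoint_left]
      rintro e he1 ⟨v, hv, rfl⟩
      obtain ⟨ha, -, -⟩ := hE₁mem (a := v) (b := f v) he1
      exact hv ha
    have hcard₁ : E₁.ncard = T₀.edgeSet.ncard :=
      Set.ncard_image_of_injective _ (Sym2.map.injective Subtype.val_injective)
    have hcardT₀ : T₀.edgeSet.ncard + 1 = D.ncard := by
      letI : Fintype ↥D := Fintype.ofFinite _
      letI : Fintype T₀.edgeSet := Fintype.ofFinite _
      have h1 : T₀.edgeFinset.card + 1 = Fintype.card ↥D := hT₀.card_edgeFinset
      have h2 : T₀.edgeSet.ncard = T₀.edgeFinset.card := Set.ncard_eq_toFinset_card' _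
      have h3 : D.ncard = Fintype.card ↥D := by
        rw [Set.ncard_eq_toFinset_card', Set.toFinset_card]
      omega
    have hcard₂ : E₂.ncard = Dᶜ.ncard := by
      refine Set.ncard_image_of_injOn ?_
      intro u hu v hv huv
      rw [Sym2.eq_iff] at huv
      rcases huv with ⟨h, -⟩ | ⟨h1, h2⟩
      · exact h
      · exact absurd (show u ∈ D by rw [h1]; exact hfD v hv) hu
    have hcompl : D.ncard + Dᶜ.ncard = Fintype.card V := by
      have := Set.ncard_add_ncard_compl D
      rwa [Nat.card_eq_fintype_card] at this
    have hDpos : 1 ≤ D.ncard := (Set.ncard_pos D.toFinite).mpr hDne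
    have hunion : T.edgeSet.ncard = E₁.ncard + E₂.ncard := by
      rw [hedgeT]
      exact Set.ncard_union_eq hdisj (Set.toFinite _) (Set.toFinite _)
    have hTtree : T.IsTree := isTree_of_connected_of_card hTconn (by omega)
    have hleafset : ∀ v ∉ D, T.neighborSet v = {f v} := by
      intro v hv
      ext w
      simp only [mem_neighborSet, Set.mem_singleton_iff]
      constructor
      · intro hadj
        rw [hT, fromEdgeSet_adj] at hadj
        rcases hadj.1 with h | h
        · obtain ⟨ha, -, -⟩ := hE₁mem h
          exact absurd ha hv
        · rcases hE₂mem h with ⟨-, h2⟩ | ⟨hw, h2⟩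
          · exact h2
          · exact absurd (show v ∈ D by rw [h2]; exact hfD w hw) hv
      · rintro rfl
        exact hpend v hv
    have hsubleaf : Dᶜ ⊆ {v : V | (T.neighborSet v).ncard = 1} := by
      intro v hv
      simp only [Set.mem_setOf_eq]
      rw [hleafset v hv, Set.ncard_singleton]
    have hfinal : Fintype.card V - k ≤ {v : V | (T.neighborSet v).ncard = 1}.ncard := by
      have h1 : Dᶜ.ncard ≤ {v : V | (T.neighborSet v).ncard = 1}.ncard :=
        Set.ncard_le_ncard hsubleaf (Set.toFinite _)
      omega
    exact ⟨T, hTle, hTtree, hfinal⟩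
  · rintro ⟨T, hTG, hTtree, hleaf⟩
    by_cases hex : ∃ v₁, (T.neighborSet v₁).ncard ≠ 1
    · obtain ⟨v₁, hv₁⟩ := hex
      refine ⟨{v : V | (T.neighborSet v).ncard ≠ 1}, ?_, ?_, ?_⟩
      · have h1 : {v : V | (T.neighborSet v).ncard = 1}.ncard +
            {v : V | (T.neighborSet v).ncard = 1}ᶜ.ncard = Fintype.card V := by
          have := Set.ncard_add_ncard_compl {v : V | (T.neighborSet v).ncard = 1}
          rwa [Nat.card_eq_fintype_card] at this
        have h2 : {v : V | (T.neighborSet v).ncard ≠ 1} =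
            {v : V | (T.neighborSet v).ncard = 1}ᶜ := by
          ext v; simp
        rw [h2]
        omega
      · haveI : Nonempty ↥{v : V | (T.neighborSet v).ncard ≠ 1} := ⟨⟨v₁, hv₁⟩⟩
        refine Connected.mk ?_
        rintro ⟨x, hx⟩ ⟨y, hy⟩
        obtain ⟨w⟩ := hTtree.isConnected.preconnected x y
        exact induce_reach hTG w.toPath.1 w.toPath.2 hx hy
      · intro v
        by_cases hv : (T.neighborSet v).ncard ≠ 1
        · exact Or.inl hv
        · push_neg at hv
          obtain ⟨u, hu⟩ := Set.ncard_eq_one.mp hv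
          have huv : T.Adj v u := by
            rw [← SimpleGraph.mem_neighborSet, hu]
            rfl
          by_cases hu' : (T.neighborSet u).ncard ≠ 1
          · exact Or.inr ⟨u, hu', hTG huv.symm⟩
          · exfalso
            push_neg at hu'
            obtain ⟨z, hz⟩ := Set.ncard_eq_one.mp hu'
            have hzv : z = v := by
              have hmem : v ∈ T.neighborSet u := huv.symm
              rw [hz, Set.mem_singleton_iff] at hmem
              exact hmem.symm
            rw [hzv] at hz
            have hclosed : ∀ x ∈ ({v, u} : Set V), ∀ y, T.Adj x y →
                y ∈ ({v, u} : Set V) := by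
              rintro x (rfl | rfl) y hxy
              · have : y ∈ T.neighborSet x := hxy
                rw [hu, Set.mem_singleton_iff] at this
                exact Or.inr this
              · have : y ∈ T.neighborSet x := hxy
                rw [hz, Set.mem_singleton_iff] at this
                exact Or.inl this
            obtain ⟨w⟩ := hTtree.isConnected.preconnected v v₁
            have hmem : v₁ ∈ ({v, u} : Set V) := closed_walk hclosed w (Or.inl rfl)
            rcases hmem with rfl | rfl
            · exact hv₁ hv
            · exact hv₁ hu'
    · push_neg at hex
      have hne : Nonempty V := Fintype.card_pos_iff.mp (by omega)
      obtain ⟨v0⟩ := hne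
      obtain ⟨u, hu⟩ := Set.ncard_eq_one.mp (hex v0)
      have hadj0 : T.Adj v0 u := by
        rw [← SimpleGraph.mem_neighborSet, hu]
        rfl
      refine ⟨{v0}, ?_, ?_, ?_⟩
      · rw [Set.ncard_singleton]; exact hk1
      · haveI : Nonempty ↥({v0} : Set V) := ⟨⟨v0, rfl⟩⟩
        refine Connected.mk ?_
        intro x y
        have hxy : x = y := Subtype.ext (x.2.trans y.2.symm)
        rw [hxy]
      · intro v
        by_cases hv : v = v0
        · exact Or.inl (by simp [hv])
        · right
          refine ⟨v0, rfl, ?_⟩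
          have hNu : T.neighborSet u = {v0} := by
            obtain ⟨z, hz⟩ := Set.ncard_eq_one.mp (hex u)
            have hmem : v0 ∈ T.neighborSet u := hadj0.symm
            rw [hz, Set.mem_singleton_iff] at hmem
            rw [hz, ← hmem]
          have hclosed : ∀ x ∈ ({v0, u} : Set V), ∀ y, T.Adj x y →
              y ∈ ({v0, u} : Set V) := by
            rintro x (rfl | rfl) y hxy
            · have : y ∈ T.neighborSet x := hxy
              rw [hu, Set.mem_singleton_iff] at this
              exact Or.inr this
            · have : y ∈ T.neighborSet x := hxy
              rw [hNu, Set.mem_singleton_iff] at this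
              exact Or.inl this
          obtain ⟨w⟩ := hTtree.isConnected.preconnected v0 v
          have hv' : v ∈ ({v0, u} : Set V) := closed_walk hclosed w (Or.inl rfl)
          rcases hv' with rfl | rfl
          · exact absurd rfl hv
          · exact hTG hadj0
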